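/- Let p ∈ (0,1] and let U be a p-Banach space of almost universal disposition for finite-dimensional p-Banach spaces. Then U is locally 1⁺-injective amongst p-Banach spaces: for every λ > 1, every finite-dimensional p-Banach space X, every subspace Y of X and every nonexpansive linear operator t : Y → U, there exists a linear operator T : X → U with T y = t y for all y ∈ Y and N(T x) ≤ λ * N x for all x ∈ X. -/
import Mathlib


/- Common framework: p-normed and p-Banach spaces, following the paper's definitions. -/

namespace PGurarii

/-- A `p`-norm on a real vector space: `N x = 0 ↔ x = 0`, absolute homogeneity, and the
`p`-triangle inequality `N (x + y) ^ p ≤ N x ^ p + N y ^ p` (values in `ℝ₊`). -/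
structure PNorm (p : ℝ) (X : Type) [AddCommGroup X] [Module ℝ X] where
  N : X → ℝ
  nonneg : ∀ x : X, 0 ≤ N x
  eq_zero_iff : ∀ x : X, N x = 0 ↔ x = 0
  smul_eq : ∀ (a : ℝ) (x : X), N (a • x) = |a| * N x
  add_pow_le : ∀ x y : X, N (x + y) ^ p ≤ N x ^ p + N y ^ p

/-- Completeness (sequential) for the induced metric `d(x,y) = N (x - y) ^ p`. -/
def IsCompleteP (p : ℝ) {X : Type} [AddCommGroup X] [Module ℝ X] (NX : PNorm p X) : Prop :=
  ∀ u : ℕ → X,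
    (∀ ε : ℝ, 0 < ε → ∃ n₀ : ℕ, ∀ m ≥ n₀, ∀ n ≥ n₀, NX.N (u m - u n) ^ p < ε) →
    ∃ x : X, ∀ ε : ℝ, 0 < ε → ∃ n₀ : ℕ, ∀ n ≥ n₀, NX.N (u n - x) ^ p < ε

/-- Separability for the induced metric topology. -/
def IsSeparableP (p : ℝ) {X : Type} [AddCommGroup X] [Module ℝ X] (NX : PNorm p X) : Prop :=
  ∃ D : Set X, D.Countable ∧ ∀ x : X, ∀ ε : ℝ, 0 < ε → ∃ y ∈ D, NX.N (x - y) ^ p < ε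

/-- A subspace is closed for the induced metric topology. -/
def IsClosedSubP (p : ℝ) {X : Type} [AddCommGroup X] [Module ℝ X] (NX : PNorm p X)
    (S : Submodule ℝ X) : Prop :=
  ∀ x : X, (∀ ε : ℝ, 0 < ε → ∃ y ∈ S, NX.N (x - y) ^ p < ε) → x ∈ S

/-- The restriction of a `p`-norm to a subspace. -/
def PNorm.restrict {p : ℝ} {X : Type} [AddCommGroup X] [Module ℝ X]
    (NX : PNorm p X) (S : Submodule ℝ X) : PNorm p S where
  N x := NX.N x
  nonneg x := NX.nonneg x
  eq_zero_iff x := by rw [NX.eq_zero_iff]; exact ZeroMemClass.coe_eq_zero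
  smul_eq a x := NX.smul_eq a x
  add_pow_le x y := NX.add_pow_le x y

/-- A `p`-Banach space: a real vector space with a `p`-norm, complete for the induced metric. -/
structure PBanach (p : ℝ) where
  carrier : Type
  [addCommGroup : AddCommGroup carrier]
  [module : Module ℝ carrier]
  pnorm : PNorm p carrier
  complete : IsCompleteP p pnorm

attribute [instance] PBanach.addCommGroup PBanach.module

/-- `U` is of almost universal disposition for finite-dimensional `p`-Banach spaces: for every
`ε > 0`, every isometry from a subspace `X` of `U` (with the restricted `p`-norm) into a
finite-dimensional `p`-Banach space `Y` extends, after an `ε`-isometry `Y → U`, the inclusion. -/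
def AUD (p : ℝ) (U : Type) [AddCommGroup U] [Module ℝ U] (NU : PNorm p U) : Prop :=
  ∀ ε : ℝ, 0 < ε → ∀ Y : PBanach p, FiniteDimensional ℝ Y.carrier →
    ∀ (Xs : Submodule ℝ U) (g : Xs →ₗ[ℝ] Y.carrier),
      (∀ x : Xs, Y.pnorm.N (g x) = NU.N (x : U)) →
      ∃ f : Y.carrier →ₗ[ℝ] U,
        (∀ y, (1 - ε) * Y.pnorm.N y ≤ NU.N (f y) ∧ NU.N (f y) ≤ (1 + ε) * Y.pnorm.N y) ∧
        ∀ x : Xs, f (g x) = (x : U)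

/-- `U` is of universal disposition for separable `p`-Banach spaces. -/
def UD (p : ℝ) (U : Type) [AddCommGroup U] [Module ℝ U] (NU : PNorm p U) : Prop :=
  ∀ Y : PBanach p, IsSeparableP p Y.pnorm →
    ∀ (Xs : Submodule ℝ U), IsClosedSubP p NU Xs →
      ∀ g : Xs →ₗ[ℝ] Y.carrier, (∀ x : Xs, Y.pnorm.N (g x) = NU.N (x : U)) →
        ∃ f : Y.carrier →ₗ[ℝ] U, (∀ y, NU.N (f y) = Y.pnorm.N y) ∧ ∀ x : Xs, f (g x) = (x : U)

end PGurarii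

namespace PGurarii

/-- Auxiliary: the p-norm of 0 is 0. -/
theorem pnorm_zero {p : ℝ} {X : Type} [AddCommGroup X] [Module ℝ X] (NX : PNorm p X) :
    NX.N 0 = 0 := (NX.eq_zero_iff 0).mpr rfl

theorem pnorm_sum_le {p : ℝ} (hp0 : 0 < p) {X : Type} [AddCommGroup X] [Module ℝ X]
    (NX : PNorm p X) {ι : Type} (s : Finset ι) (f : ι → X) :
    NX.N (∑ i ∈ s, f i) ^ p ≤ ∑ i ∈ s, NX.N (f i) ^ p := by
  classical
  induction s using Finset.cons_induction with
  | empty => simp [pnorm_zero NX, Real.zero_rpow hp0.ne']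
  | cons i s hi ih =>
    rw [Finset.sum_cons, Finset.sum_cons]
    exact (NX.add_pow_le _ _).trans (by linarith)

theorem complete_of_fd {p : ℝ} (hp0 : 0 < p) {X : Type} [AddCommGroup X] [Module ℝ X]
    [FiniteDimensional ℝ X] (NX : PNorm p X) : IsCompleteP p NX := by
  classical
  by_cases hX : Subsingleton X
  · intro u hu
    refine ⟨0, fun ε hε => ⟨0, fun n _ => ?_⟩⟩
    have h0 : u n - 0 = 0 := Subsingleton.elim _ _
    rw [h0, pnorm_zero NX, Real.zero_rpow hp0.ne']; exact hε
  have : Nontrivial X := not_subsingleton_iff_nontrivial.mp hX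
  set n := Module.finrank ℝ X with hn
  let e : X ≃ₗ[ℝ] (Fin n → ℝ) := (Module.finBasis ℝ X).equivFun
  set F : (Fin n → ℝ) → ℝ := fun v => NX.N (e.symm v) ^ p with hF
  have hF0 : ∀ v, 0 ≤ F v := fun v => Real.rpow_nonneg (NX.nonneg _) p
  set C : ℝ := ∑ i : Fin n, NX.N (e.symm (Pi.single i 1)) ^ p with hCdef
  have hC0 : 0 ≤ C := Finset.sum_nonneg fun i _ => Real.rpow_nonneg (NX.nonneg _) p
  -- upper bound
  have hC : ∀ v : Fin n → ℝ, F v ≤ C * ‖v‖ ^ p := by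
    intro v
    have hv : e.symm v = ∑ i : Fin n, v i • e.symm (Pi.single i 1) := by
      have h1 : v = ∑ i : Fin n, v i • (Pi.single i 1 : Fin n → ℝ) := by
        ext j
        rw [Finset.sum_apply]
        simp [Pi.single_apply, mul_comm]
      conv_lhs => rw [h1]
      rw [map_sum]
      simp
    have hstep : F v ≤ ∑ i : Fin n, NX.N (v i • e.symm (Pi.single i 1)) ^ p := by
      rw [hF]; simp only; rw [hv]; exact pnorm_sum_le hp0 NX _ _
    refine hstep.trans ?_
    rw [hCdef, Finset.sum_mul]
    refine Finset.sum_le_sum fun i _ => ?_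
    rw [NX.smul_eq, Real.mul_rpow (abs_nonneg _) (NX.nonneg _)]
    rw [mul_comm (NX.N (e.symm (Pi.single i 1)) ^ p) (‖v‖ ^ p)]
    refine mul_le_mul_of_nonneg_right ?_ (Real.rpow_nonneg (NX.nonneg _) p)
    refine Real.rpow_le_rpow (abs_nonneg _) ?_ hp0.le
    simpa using norm_le_pi_norm v i
  -- reverse triangle / continuity
  have htri : ∀ a b : Fin n → ℝ, F a ≤ F b + C * ‖a - b‖ ^ p := by
    intro a b
    have h1 : e.symm a = e.symm b + e.symm (a - b) := by rw [← map_add]; ring_nf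
    have h2 : F a ≤ F b + F (a - b) := by
      rw [hF]; simp only; rw [h1]; exact NX.add_pow_le _ _
    exact h2.trans (by linarith [hC (a - b)])
  have habs : ∀ a b : Fin n → ℝ, |F a - F b| ≤ C * ‖a - b‖ ^ p := by
    intro a b
    rw [abs_sub_le_iff]
    constructor
    · linarith [htri a b]
    · have := htri b a
      rw [show b - a = -(a-b) by ring, norm_neg] at this
      linarith
  -- the handy epsilon-delta bound
  have hkey : ∀ ε : ℝ, 0 < ε → ∃ δ : ℝ, 0 < δ ∧ ∀ r : ℝ, 0 ≤ r → r < δ → C * r ^ p < ε := by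
    intro ε hε
    refine ⟨(ε / (C + 1)) ^ (1/p), Real.rpow_pos_of_pos (by positivity) _, fun r hr hrδ => ?_⟩
    have h1 : r ^ p < ((ε / (C + 1)) ^ (1/p)) ^ p := Real.rpow_lt_rpow hr hrδ hp0
    rw [← Real.rpow_mul (by positivity), one_div, inv_mul_cancel₀ hp0.ne', Real.rpow_one] at h1
    have h2 : C * r ^ p ≤ C * (ε / (C + 1)) := by
      exact mul_le_mul_of_nonneg_left h1.le hC0
    have h3 : C * (ε / (C + 1)) < ε := by
      rw [mul_div_assoc', div_lt_iff₀ (by positivity)]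
      nlinarith
    linarith
  have hFcont : Continuous F := by
    rw [Metric.continuous_iff]
    intro b ε hε
    obtain ⟨δ, hδ, hδε⟩ := hkey ε hε
    refine ⟨δ, hδ, fun a hab => ?_⟩
    rw [Real.dist_eq]
    calc |F a - F b| ≤ C * ‖a - b‖ ^ p := habs a b
      _ < ε := hδε _ (norm_nonneg _) (by rwa [dist_eq_norm] at hab)
  -- compactness / minimum on sphere
  have hnt : Nontrivial (Fin n → ℝ) := by
    obtain ⟨x, hx⟩ := exists_ne (0 : X)
    exact ⟨⟨e x, 0, fun h => hx (by simpa using congrArg e.symm h)⟩⟩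
  have hsph : (Metric.sphere (0 : Fin n → ℝ) 1).Nonempty :=
    NormedSpace.sphere_nonempty.mpr zero_le_one
  obtain ⟨a₀, ha₀s, ha₀min⟩ :=
    (isCompact_sphere (0 : Fin n → ℝ) 1).exists_isMinOn hsph hFcont.continuousOn
  set m : ℝ := F a₀ with hmdef
  have ha₀norm : ‖a₀‖ = 1 := by simpa using ha₀s
  have hm : 0 < m := by
    have ha₀ne : e.symm a₀ ≠ 0 := by
      intro h
      have : a₀ = 0 := by simpa using congrArg e h
      rw [this] at ha₀norm; simp at ha₀norm
    have : NX.N (e.symm a₀) ≠ 0 := fun h => ha₀ne ((NX.eq_zero_iff _).mp h)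
    exact Real.rpow_pos_of_pos (lt_of_le_of_ne (NX.nonneg _) (Ne.symm this)) p
  have hlow : ∀ v : Fin n → ℝ, m * ‖v‖ ^ p ≤ F v := by
    intro v
    by_cases hv : v = 0
    · rw [hv]; simp [Real.zero_rpow hp0.ne']; exact hF0 0
    have hvn : 0 < ‖v‖ := norm_pos_iff.mpr hv
    set w : Fin n → ℝ := ‖v‖⁻¹ • v with hw
    have hwn : ‖w‖ = 1 := by
      rw [hw, norm_smul, norm_inv, norm_norm, inv_mul_cancel₀ hvn.ne']
    have hws : w ∈ Metric.sphere (0 : Fin n → ℝ) 1 := by simp [hwn]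
    have hmw : m ≤ F w := ha₀min hws
    have hvw : v = ‖v‖ • w := by rw [hw, smul_smul, mul_inv_cancel₀ hvn.ne', one_smul]
    have h1 : e.symm v = ‖v‖ • e.symm w := by
      conv_lhs => rw [hvw]
      exact map_smul _ _ _
    have hFv : F v = ‖v‖ ^ p * F w := by
      rw [hF]; simp only
      rw [h1, NX.smul_eq, abs_of_pos hvn, Real.mul_rpow hvn.le (NX.nonneg _)]
    rw [hFv, mul_comm m]
    exact mul_le_mul_of_nonneg_left hmw (Real.rpow_nonneg (norm_nonneg _) p)
  -- completeness
  intro u hu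
  have hcauchy : CauchySeq (fun k => e (u k)) := by
    rw [Metric.cauchySeq_iff]
    intro ε hε
    obtain ⟨n₀, hn₀⟩ := hu (m * ε ^ p) (by positivity)
    refine ⟨n₀, fun k hk l hl => ?_⟩
    have h1 : NX.N (u k - u l) ^ p < m * ε ^ p := hn₀ k hk l hl
    have h2 : m * ‖e (u k) - e (u l)‖ ^ p ≤ NX.N (u k - u l) ^ p := by
      have := hlow (e (u k) - e (u l))
      rw [hF] at this; simp only at this
      rw [show e.symm (e (u k) - e (u l)) = u k - u l by
        rw [map_sub]; simp] at this
      exact this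
    have h3 : ‖e (u k) - e (u l)‖ ^ p < ε ^ p := by
      have := lt_of_le_of_lt h2 h1
      nlinarith [Real.rpow_nonneg (norm_nonneg (e (u k) - e (u l))) p]
    rw [dist_eq_norm]
    by_contra hcon
    push_neg at hcon
    exact absurd (Real.rpow_le_rpow hε.le hcon hp0.le) (not_le.mpr h3)
  obtain ⟨a, ha⟩ := cauchySeq_tendsto_of_complete hcauchy
  refine ⟨e.symm a, fun ε hε => ?_⟩
  obtain ⟨δ, hδ, hδε⟩ := hkey ε hε
  rw [Metric.tendsto_atTop] at ha
  obtain ⟨n₀, hn₀⟩ := ha δ hδ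
  refine ⟨n₀, fun k hk => ?_⟩
  have h1 : dist (e (u k)) a < δ := hn₀ k hk
  rw [dist_eq_norm] at h1
  have h2 : NX.N (u k - e.symm a) ^ p ≤ C * ‖e (u k) - a‖ ^ p := by
    have := hC (e (u k) - a)
    rw [hF] at this; simp only at this
    rw [show e.symm (e (u k) - a) = u k - e.symm a by rw [map_sub]; simp] at this
    exact this
  exact lt_of_le_of_lt h2 (hδε _ (norm_nonneg _) h1)

/-- every `p`-Banach space of almost universal disposition for finite-dimensional
`p`-Banach spaces is locally `1⁺`-injective amongst `p`-Banach spaces. -/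
theorem statement12 (p : ℝ) (hp0 : 0 < p) (hp1 : p ≤ 1)
    (U : PBanach p) (hUaud : AUD p U.carrier U.pnorm) :
    ∀ lam : ℝ, 1 < lam →
      ∀ X : PBanach p, FiniteDimensional ℝ X.carrier →
        ∀ (Y : Submodule ℝ X.carrier) (t : Y →ₗ[ℝ] U.carrier),
          (∀ y : Y, U.pnorm.N (t y) ≤ X.pnorm.N (y : X.carrier)) →
          ∃ T : X.carrier →ₗ[ℝ] U.carrier,
            (∀ y : Y, T (y : X.carrier) = t y) ∧
            ∀ x : X.carrier, U.pnorm.N (T x) ≤ lam * X.pnorm.N x := by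
  classical
  intro lam hlam X hXfd Y t ht
  haveI := hXfd
  set NX := X.pnorm with hNX
  set NU := U.pnorm with hNU
  -- rpow helpers
  have hrp : ∀ a : ℝ, 0 ≤ a → (a ^ p) ^ (1/p) = a := fun a ha => by
    rw [← Real.rpow_mul ha, mul_one_div, div_self hp0.ne', Real.rpow_one]
  have hrpinv : ∀ a : ℝ, 0 ≤ a → (a ^ (1/p)) ^ p = a := fun a ha => by
    rw [← Real.rpow_mul ha, one_div, inv_mul_cancel₀ hp0.ne', Real.rpow_one]
  -- the pushout seminorm (to the p-th power)
  set ρp : X.carrier → ℝ := fun x =>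
    sInf (Set.range fun y : Y => NX.N (x - (y : X.carrier)) ^ p + NU.N (t y) ^ p) with hρp
  have hterm_nonneg : ∀ (x : X.carrier) (y : Y),
      0 ≤ NX.N (x - (y : X.carrier)) ^ p + NU.N (t y) ^ p := fun x y =>
    add_nonneg (Real.rpow_nonneg (NX.nonneg _) p) (Real.rpow_nonneg (NU.nonneg _) p)
  have hbdd : ∀ x : X.carrier,
      BddBelow (Set.range fun y : Y => NX.N (x - (y : X.carrier)) ^ p + NU.N (t y) ^ p) := by
    intro x
    refine ⟨0, ?_⟩
    rintro r ⟨y, rfl⟩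
    exact hterm_nonneg x y
  have hne : ∀ x : X.carrier,
      (Set.range fun y : Y => NX.N (x - (y : X.carrier)) ^ p + NU.N (t y) ^ p).Nonempty :=
    fun x => ⟨_, ⟨0, rfl⟩⟩
  have hρp_le : ∀ (x : X.carrier) (y : Y),
      ρp x ≤ NX.N (x - (y : X.carrier)) ^ p + NU.N (t y) ^ p :=
    fun x y => csInf_le (hbdd x) ⟨y, rfl⟩
  have hρp_nonneg : ∀ x : X.carrier, 0 ≤ ρp x := by
    intro x
    refine Real.sInf_nonneg ?_
    rintro r ⟨y, rfl⟩
    exact hterm_nonneg x y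
  have hge : ∀ (x : X.carrier) (c : ℝ),
      (∀ y : Y, c ≤ NX.N (x - (y : X.carrier)) ^ p + NU.N (t y) ^ p) → c ≤ ρp x := by
    intro x c h
    refine le_csInf (hne x) ?_
    rintro r ⟨y, rfl⟩
    exact h y
  have hρp0 : ρp 0 = 0 := by
    refine le_antisymm ?_ (hρp_nonneg 0)
    have := hρp_le 0 0
    simpa [pnorm_zero NX, pnorm_zero NU, Real.zero_rpow hp0.ne'] using this
  have hadd : ∀ x₁ x₂ : X.carrier, ρp (x₁ + x₂) ≤ ρp x₁ + ρp x₂ := by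
    intro x₁ x₂
    have key : ∀ y₁ y₂ : Y, ρp (x₁ + x₂) ≤
        (NX.N (x₁ - (y₁ : X.carrier)) ^ p + NU.N (t y₁) ^ p) +
        (NX.N (x₂ - (y₂ : X.carrier)) ^ p + NU.N (t y₂) ^ p) := by
      intro y₁ y₂
      refine (hρp_le (x₁ + x₂) (y₁ + y₂)).trans ?_
      have e1 : x₁ + x₂ - ((y₁ + y₂ : Y) : X.carrier) =
          (x₁ - (y₁ : X.carrier)) + (x₂ - (y₂ : X.carrier)) := by
        rw [Submodule.coe_add]; abel
      rw [e1, map_add]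
      have h1 := NX.add_pow_le (x₁ - (y₁ : X.carrier)) (x₂ - (y₂ : X.carrier))
      have h2 := NU.add_pow_le (t y₁) (t y₂)
      linarith
    have step1 : ∀ y₂ : Y,
        ρp (x₁ + x₂) - (NX.N (x₂ - (y₂ : X.carrier)) ^ p + NU.N (t y₂) ^ p) ≤ ρp x₁ :=
      fun y₂ => hge x₁ _ (fun y₁ => by linarith [key y₁ y₂])
    have step2 : ρp (x₁ + x₂) - ρp x₁ ≤ ρp x₂ :=
      hge x₂ _ (fun y₂ => by linarith [step1 y₂])
    linarith
  have hsmul_le : ∀ (a : ℝ) (x : X.carrier), a ≠ 0 → ρp (a • x) ≤ |a| ^ p * ρp x := by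
    intro a x ha
    have key : ∀ y : Y, ρp (a • x) ≤
        |a| ^ p * (NX.N (x - (y : X.carrier)) ^ p + NU.N (t y) ^ p) := by
      intro y
      refine (hρp_le (a • x) (a • y)).trans_eq ?_
      have e1 : a • x - ((a • y : Y) : X.carrier) = a • (x - (y : X.carrier)) := by
        rw [Submodule.coe_smul, smul_sub]
      rw [e1, NX.smul_eq, map_smul, NU.smul_eq,
        Real.mul_rpow (abs_nonneg a) (NX.nonneg _), Real.mul_rpow (abs_nonneg a) (NU.nonneg _)]
      ring
    have hap : (0:ℝ) < |a| ^ p := Real.rpow_pos_of_pos (abs_pos.mpr ha) p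
    have hdiv : ρp (a • x) / |a| ^ p ≤ ρp x :=
      hge x _ (fun y => (div_le_iff₀ hap).mpr (by linarith [key y]))
    calc ρp (a • x) = (ρp (a • x) / |a| ^ p) * |a| ^ p := by field_simp
      _ ≤ ρp x * |a| ^ p := mul_le_mul_of_nonneg_right hdiv hap.le
      _ = |a| ^ p * ρp x := mul_comm _ _
  have hsmul : ∀ (a : ℝ) (x : X.carrier), ρp (a • x) = |a| ^ p * ρp x := by
    intro a x
    by_cases ha : a = 0
    · rw [ha, zero_smul, hρp0, abs_zero, Real.zero_rpow hp0.ne', zero_mul]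
    refine le_antisymm (hsmul_le a x ha) ?_
    have h1 : ρp x ≤ |a⁻¹| ^ p * ρp (a • x) := by
      have := hsmul_le a⁻¹ (a • x) (inv_ne_zero ha)
      rwa [smul_smul, inv_mul_cancel₀ ha, one_smul] at this
    have h2 : |a| ^ p * |a⁻¹| ^ p = 1 := by
      rw [← Real.mul_rpow (abs_nonneg _) (abs_nonneg _), ← abs_mul, mul_inv_cancel₀ ha,
        abs_one, Real.one_rpow]
    calc |a| ^ p * ρp x ≤ |a| ^ p * (|a⁻¹| ^ p * ρp (a • x)) := by
          refine mul_le_mul_of_nonneg_left h1 (Real.rpow_nonneg (abs_nonneg _) p)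
      _ = (|a| ^ p * |a⁻¹| ^ p) * ρp (a • x) := by ring
      _ = ρp (a • x) := by rw [h2, one_mul]
  have hρp_leN : ∀ x : X.carrier, ρp x ≤ NX.N x ^ p := by
    intro x
    have := hρp_le x 0
    simpa [pnorm_zero NU, Real.zero_rpow hp0.ne'] using this
  have hρp_tY : ∀ y : Y, ρp (y : X.carrier) = NU.N (t y) ^ p := by
    intro y
    refine le_antisymm ?_ ?_
    · refine (hρp_le (y : X.carrier) y).trans_eq ?_
      rw [sub_self, pnorm_zero NX, Real.zero_rpow hp0.ne', zero_add]
    · refine hge _ _ (fun y' => ?_)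
      have h1 : NU.N (t y) ^ p ≤ NU.N (t y - t y') ^ p + NU.N (t y') ^ p := by
        have := NU.add_pow_le (t y - t y') (t y')
        rwa [sub_add_cancel] at this
      have h2 : NU.N (t y - t y') ≤ NX.N ((y : X.carrier) - (y' : X.carrier)) := by
        rw [← map_sub]
        refine (ht (y - y')).trans_eq ?_
        rw [Submodule.coe_sub]
      have h3 : NU.N (t y - t y') ^ p ≤ NX.N ((y : X.carrier) - (y' : X.carrier)) ^ p :=
        Real.rpow_le_rpow (NU.nonneg _) h2 hp0.le
      linarith
  -- the kernel submodule
  set K : Submodule ℝ X.carrier :=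
    { carrier := {x | ρp x = 0}
      add_mem' := by
        intro a b ha hb
        refine le_antisymm ?_ (hρp_nonneg _)
        have := hadd a b
        simp only [Set.mem_setOf_eq] at ha hb
        rw [ha, hb] at this
        linarith
      zero_mem' := hρp0
      smul_mem' := by
        intro c x hx
        simp only [Set.mem_setOf_eq] at hx ⊢
        rw [hsmul, hx, mul_zero] } with hK
  have hmemK : ∀ x : X.carrier, x ∈ K ↔ ρp x = 0 := fun x => Iff.rfl
  have hcongr : ∀ x x' : X.carrier, x - x' ∈ K → ρp x = ρp x' := by
    intro x x' h
    have h' : ρp (x - x') = 0 := (hmemK _).mp h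
    have h'' : ρp (x' - x) = 0 := by
      have e1 : x' - x = (-1 : ℝ) • (x - x') := by
        rw [neg_one_smul]; abel
      rw [e1, hsmul, h', mul_zero]
    refine le_antisymm ?_ ?_
    · have := hadd x' (x - x')
      rw [add_sub_cancel] at this
      linarith
    · have := hadd x (x' - x)
      rw [add_sub_cancel] at this
      linarith
  -- the quotient space and its p-norm
  set W := X.carrier ⧸ K with hW
  set Nw : W → ℝ := fun w => Quotient.liftOn' w (fun x => ρp x ^ (1/p))
    (fun a b hab => by
      have hab' : a - b ∈ K := (Submodule.quotientRel_def K).mp hab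
      exact congrArg (fun r => r ^ (1/p)) (hcongr a b hab')) with hNw
  have Nw_mk : ∀ x : X.carrier, Nw (Submodule.Quotient.mk x) = ρp x ^ (1/p) := fun x => rfl
  have hsurj : Function.Surjective (Submodule.Quotient.mk (p := K)) :=
    Submodule.Quotient.mk_surjective K
  set Nwp : PNorm p W :=
    { N := Nw
      nonneg := by
        intro w
        obtain ⟨x, rfl⟩ := hsurj w
        rw [Nw_mk]
        exact Real.rpow_nonneg (hρp_nonneg x) _
      eq_zero_iff := by
        intro w
        obtain ⟨x, rfl⟩ := hsurj w
        rw [Nw_mk, Real.rpow_eq_zero (hρp_nonneg x) (by positivity),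
          Submodule.Quotient.mk_eq_zero]
        exact Iff.symm (hmemK x).symm
      smul_eq := by
        intro a w
        obtain ⟨x, rfl⟩ := hsurj w
        rw [← Submodule.Quotient.mk_smul, Nw_mk, Nw_mk, hsmul,
          Real.mul_rpow (Real.rpow_nonneg (abs_nonneg a) p) (hρp_nonneg x),
          hrp _ (abs_nonneg a)]
      add_pow_le := by
        intro w₁ w₂
        obtain ⟨x₁, rfl⟩ := hsurj w₁
        obtain ⟨x₂, rfl⟩ := hsurj w₂
        rw [← Submodule.Quotient.mk_add, Nw_mk, Nw_mk, Nw_mk,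
          hrpinv _ (hρp_nonneg (x₁ + x₂)), hrpinv _ (hρp_nonneg x₁), hrpinv _ (hρp_nonneg x₂)]
        exact hadd x₁ x₂ } with hNwp
  have Nwp_mk : ∀ x : X.carrier, Nwp.N (Submodule.Quotient.mk x) = ρp x ^ (1/p) :=
    fun x => rfl
  -- the quotient is a finite-dimensional p-Banach space
  let Wb : PBanach p := @PBanach.mk p W _ _ Nwp (complete_of_fd hp0 Nwp)
  have hWfd : FiniteDimensional ℝ Wb.carrier := by
    show FiniteDimensional ℝ W
    infer_instance
  -- the isometry g from t(Y) ⊆ U into W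
  set s : Y →ₗ[ℝ] W := K.mkQ ∘ₗ Y.subtype with hs
  have hker : LinearMap.ker t ≤ LinearMap.ker s := by
    intro y hy
    rw [LinearMap.mem_ker] at hy ⊢
    have : ρp (y : X.carrier) = 0 := by
      rw [hρp_tY y, hy, pnorm_zero NU, Real.zero_rpow hp0.ne']
    show K.mkQ (Y.subtype y) = 0
    rw [Submodule.mkQ_apply, Submodule.Quotient.mk_eq_zero]
    exact (hmemK _).mpr this
  set g : ↥(LinearMap.range t) →ₗ[ℝ] W :=
    ((LinearMap.ker t).liftQ s hker) ∘ₗ (t.quotKerEquivRange).symm.toLinearMap with hg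
  have hg_ty : ∀ y : Y, g ⟨t y, LinearMap.mem_range_self t y⟩ =
      Submodule.Quotient.mk (y : X.carrier) := by
    intro y
    have h1 : (t.quotKerEquivRange).symm ⟨t y, LinearMap.mem_range_self t y⟩ =
        Submodule.Quotient.mk y := by
      rw [LinearEquiv.symm_apply_eq]
      exact Subtype.ext (t.quotKerEquivRange_apply_mk y).symm
    show ((LinearMap.ker t).liftQ s hker)
        ((t.quotKerEquivRange).symm ⟨t y, LinearMap.mem_range_self t y⟩) = _
    rw [h1, Submodule.liftQ_apply]
    rfl
  have hgiso : ∀ x : ↥(LinearMap.range t), Wb.pnorm.N (g x) = NU.N (x : U.carrier) := by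
    rintro ⟨xv, hxv⟩
    obtain ⟨y, rfl⟩ := hxv
    show Nwp.N (g ⟨t y, LinearMap.mem_range_self t y⟩) = NU.N (t y)
    rw [hg_ty y, Nwp_mk, hρp_tY y, hrp _ (NU.nonneg _)]
  -- apply almost universal disposition
  obtain ⟨f, hf, hfg⟩ := hUaud (lam - 1) (by linarith) Wb hWfd (LinearMap.range t) g hgiso
  refine ⟨f ∘ₗ K.mkQ, ?_, ?_⟩
  · intro y
    have h1 : K.mkQ (y : X.carrier) = g ⟨t y, LinearMap.mem_range_self t y⟩ := by
      rw [hg_ty y, Submodule.mkQ_apply]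
    show f (K.mkQ (y : X.carrier)) = t y
    rw [h1]
    exact hfg ⟨t y, LinearMap.mem_range_self t y⟩
  · intro x
    have h1 : NU.N (f (K.mkQ x)) ≤ (1 + (lam - 1)) * Nwp.N (K.mkQ x) := (hf (K.mkQ x)).2
    have h2 : Nwp.N (K.mkQ x) ≤ NX.N x := by
      rw [Submodule.mkQ_apply, Nwp_mk]
      calc ρp x ^ (1/p) ≤ (NX.N x ^ p) ^ (1/p) :=
            Real.rpow_le_rpow (hρp_nonneg x) (hρp_leN x) (by positivity)
        _ = NX.N x := hrp _ (NX.nonneg x)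
    have hlam0 : (0:ℝ) < lam := by linarith
    calc NU.N ((f ∘ₗ K.mkQ) x) = NU.N (f (K.mkQ x)) := rfl
      _ ≤ (1 + (lam - 1)) * Nwp.N (K.mkQ x) := h1
      _ = lam * Nwp.N (K.mkQ x) := by ring_nf
      _ ≤ lam * NX.N x := mul_le_mul_of_nonneg_left h2 hlam0.le


end PGurarii
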